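/- Let D = Dⁿ ∪ Dˣ be a database instance, Q a monotone Boolean query with ¬Q(∅), and t ∉ D a fresh tuple. Then CS(Dⁿ, Dˣ, Q) ⊆ CS(Dⁿ ∪ {t}, Dˣ, Q); that is, every actual cause for Q in D remains an actual cause after t is inserted as an endogenous tuple. (Proposition 1(a).) -/
import Mathlib

/-- `t` is an actual cause for query `Q` in instance `D` with endogenous part `Dn`:
there is a contingency set `Γ ⊆ Dn` not containing `t` such that `D ∖ Γ ⊨ Q`
and `D ∖ (Γ ∪ {t}) ⊭ Q`. -/
def IsCause {U : Type*} [DecidableEq U] (D Dn : Finset U) (Q : Finset U → Prop) (t : U) : Prop :=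
  t ∈ Dn ∧ ∃ Γ ⊆ Dn, t ∉ Γ ∧ Q (D \ Γ) ∧ ¬ Q (D \ insert t Γ)

/-- Proposition 1(a): inserting a fresh endogenous tuple preserves actual causes. -/
theorem causes_mono_endogenous_insertion
    {U : Type*} [DecidableEq U] (Dn Dx : Finset U) (Q : Finset U → Prop)
    (hmono : ∀ S S' : Finset U, S ⊆ S' → Q S → Q S')
    (hempty : ¬ Q ∅)
    (hdisj : Disjoint Dn Dx)
    (t : U) (ht : t ∉ Dn ∪ Dx) :
    ∀ u, IsCause (Dn ∪ Dx) Dn Q u → IsCause (insert t Dn ∪ Dx) (insert t Dn) Q u := by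
  rintro u ⟨hu, Γ, hΓ, huΓ, hQ, hnQ⟩
  simp only [Finset.mem_union, not_or] at ht
  have htu : u ≠ t := fun h => ht.1 (h ▸ hu)
  refine ⟨Finset.mem_insert_of_mem hu, insert t Γ, Finset.insert_subset_insert _ hΓ,
    by simp [Finset.mem_insert, htu, huΓ], ?_, ?_⟩
  · have h : (insert t Dn ∪ Dx) \ insert t Γ = (Dn ∪ Dx) \ Γ := by
      ext x
      by_cases hx : x = t
      · subst hx; simp [ht.1, ht.2]
      · simp only [Finset.mem_sdiff, Finset.mem_union, Finset.mem_insert, hx]; tauto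
    rwa [h]
  · have h : (insert t Dn ∪ Dx) \ insert u (insert t Γ) = (Dn ∪ Dx) \ insert u Γ := by
      ext x
      by_cases hx : x = t
      · subst hx; simp [ht.1, ht.2]
      · simp only [Finset.mem_sdiff, Finset.mem_union, Finset.mem_insert, hx]; tauto
    rwa [h]
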